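/- Let k > 0 and M > 3, and let δ > 0 satisfy M·δ < k. Let z = a + ib ∈ ℂ with |b| < δ and |a| > k + (M−1)·δ. Then |a| + k > (3M−1)·δ, and |z² − k²| ≥ (|a| + k)·((M−1) − 1/(3M−1))·δ, and Re(k² − z²) < 0. -/

import Mathlib

/-- Case (2) of the PML decay lemma. -/
theorem stmt_2 (k M δ : ℝ) (z : ℂ) (hk : 0 < k) (hM : 3 < M) (hδ : 0 < δ)
    (hMδ : M * δ < k) (hb : |z.im| < δ) (ha : k + (M - 1) * δ < |z.re|) :
    (3 * M - 1) * δ < |z.re| + k ∧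
    (|z.re| + k) * ((M - 1) - 1 / (3 * M - 1)) * δ ≤ ‖z ^ 2 - (k : ℂ) ^ 2‖ ∧
    (((k : ℂ) ^ 2 - z ^ 2)).re < 0 := by
  set a := z.re with ha'
  set b := z.im with hb'
  have h3M : (0:ℝ) < 3 * M - 1 := by linarith
  have h1 : (3 * M - 1) * δ < |a| + k := by nlinarith
  have hre : (z ^ 2 - (k:ℂ) ^ 2).re = a ^ 2 - b ^ 2 - k ^ 2 := by
    simp [pow_two, Complex.mul_re, ← ha', ← hb']
  have hinv : (3 * M - 1) * (1 / (3 * M - 1)) = 1 := by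
    field_simp
  have hbsq : b ^ 2 < δ ^ 2 := by
    have := sq_abs b
    nlinarith [abs_nonneg b]
  have hak : (0:ℝ) < |a| + k := by positivity
  have hA : (M - 1) * δ * (|a| + k) < a ^ 2 - k ^ 2 := by
    have hsq : a ^ 2 = |a| * |a| := by rw [← sq_abs a]; ring
    nlinarith [mul_lt_mul_of_pos_right (show (M - 1) * δ < |a| - k by linarith) hak]
  have hδ1 : δ < (|a| + k) * (1 / (3 * M - 1)) := by
    rw [← div_eq_mul_one_div, lt_div_iff₀ h3M]
    linarith [h1]
  have hδ2 : δ * δ < (|a| + k) * (1 / (3 * M - 1)) * δ :=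
    mul_lt_mul_of_pos_right hδ1 hδ
  have hkey : (|a| + k) * ((M - 1) - 1 / (3 * M - 1)) * δ ≤ a ^ 2 - b ^ 2 - k ^ 2 := by
    nlinarith [hA, hδ2, hbsq]
  refine ⟨h1, ?_, ?_⟩
  · calc (|a| + k) * ((M - 1) - 1 / (3 * M - 1)) * δ ≤ (z ^ 2 - (k:ℂ) ^ 2).re := by
          rw [hre]; exact hkey
      _ ≤ ‖z ^ 2 - (k:ℂ) ^ 2‖ := Complex.re_le_norm _
  · have hpos : (0:ℝ) < (|a| + k) * ((M - 1) - 1 / (3 * M - 1)) * δ := by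
      have : (0:ℝ) < (M - 1) - 1 / (3 * M - 1) := by
        rw [sub_pos, div_lt_iff₀ h3M]; nlinarith
      positivity
    have : (( (k:ℂ) ^ 2 - z ^ 2)).re = -((z ^ 2 - (k:ℂ) ^ 2).re) := by
      simp [Complex.sub_re]
    rw [this, hre]
    linarith
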